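/- With the above notation, r_A·(√(l²+1) + √(m̄²+1) + √(n̄²+1) − l + m̄ + n̄ + 1)/(2l) = r·sinh²σ_A. -/

import Mathlib

open Real

set_option maxHeartbeats 1000000 in
private lemma malfatti_key_id (ps px py pz pa pb pc : ℝ)
    (hps0 : 0 < ps) (hpx0 : 0 < px) (hpy0 : 0 < py) (hpz0 : 0 < pz)
    (hrel : ps ^ 2 = px ^ 2 + py ^ 2 + pz ^ 2) :
    ps * py * pz / px * (pb * pc / (py * pz) + pa * pc / (ps * py) + pa * pb / (ps * pz)
        - ps * px / (py * pz) + px * pz / (ps * py) + px * py / (ps * pz) + 1) / (2 * (ps * px / (py * pz)))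
      = px * py * pz / ps *
        (((ps / px * (pb / px) + pa / px * (pz / px)) * (pc / px)
          + (pa / px * (pb / px) + ps / px * (pz / px)) * (py / px)) - 1) / 2 := by
  field_simp
  linear_combination (-px) * hrel

set_option maxHeartbeats 1000000 in
theorem malfatti_radius_a6
    (a b c : ℝ) (ha : 0 < a) (hb : 0 < b) (hc : 0 < c)
    (habc : a < b + c) (hbca : b < c + a) (hcab : c < a + b)
    (s r rA rC αA βA γA σA l mb nb : ℝ)
    (hs : s = (a + b + c) / 2)
    (hr : r = Real.sqrt ((s - a) * (s - b) * (s - c) / s))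
    (hrA : rA = Real.sqrt (s * (s - b) * (s - c) / (s - a)))
    (hrC : rC = Real.sqrt (s * (s - a) * (s - b) / (s - c)))
    (hαA : 0 < αA) (hβA : 0 < βA) (hγA : 0 < γA)
    (hsinhα : Real.sinh αA ^ 2 = a / (s - a))
    (hsinhβ : Real.sinh βA ^ 2 = (s - c) / (s - a))
    (hsinhγ : Real.sinh γA ^ 2 = (s - b) / (s - a))
    (hσA : σA = (αA + βA + γA) / 2)
    (hl : l = s / rA) (hm : mb = (s - c) / rA) (hn : nb = (s - b) / rA) :
    rA * (Real.sqrt (l ^ 2 + 1) + Real.sqrt (mb ^ 2 + 1) + Real.sqrt (nb ^ 2 + 1) - l + mb + nb + 1) / (2 * l) = r * Real.sinh σA ^ 2 := by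
  subst hs
  have hx : 0 < (a + b + c) / 2 - a := by linarith
  have hy : 0 < (a + b + c) / 2 - b := by linarith
  have hz : 0 < (a + b + c) / 2 - c := by linarith
  have hs0 : 0 < (a + b + c) / 2 := by linarith
  set ps := Real.sqrt ((a + b + c) / 2) with hps_def
  set px := Real.sqrt ((a + b + c) / 2 - a) with hpx_def
  set py := Real.sqrt ((a + b + c) / 2 - b) with hpy_def
  set pz := Real.sqrt ((a + b + c) / 2 - c) with hpz_def
  set pa := Real.sqrt a with hpa_def
  set pb := Real.sqrt b with hpb_def
  set pc := Real.sqrt c with hpc_def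
  have hps2 : ps ^ 2 = (a + b + c) / 2 := Real.sq_sqrt hs0.le
  have hpx2 : px ^ 2 = (a + b + c) / 2 - a := Real.sq_sqrt hx.le
  have hpy2 : py ^ 2 = (a + b + c) / 2 - b := Real.sq_sqrt hy.le
  have hpz2 : pz ^ 2 = (a + b + c) / 2 - c := Real.sq_sqrt hz.le
  have hpa2 : pa ^ 2 = a := Real.sq_sqrt ha.le
  have hpb2 : pb ^ 2 = b := Real.sq_sqrt hb.le
  have hpc2 : pc ^ 2 = c := Real.sq_sqrt hc.le
  have hps0 : 0 < ps := Real.sqrt_pos.mpr hs0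
  have hpx0 : 0 < px := Real.sqrt_pos.mpr hx
  have hpy0 : 0 < py := Real.sqrt_pos.mpr hy
  have hpz0 : 0 < pz := Real.sqrt_pos.mpr hz
  -- rA and r in terms of square roots
  have hrA' : rA = ps * py * pz / px := by
    rw [hrA, Real.sqrt_div (by positivity), Real.sqrt_mul (by positivity),
      Real.sqrt_mul hs0.le]
  have hr' : r = px * py * pz / ps := by
    rw [hr, Real.sqrt_div (by positivity), Real.sqrt_mul (by positivity),
      Real.sqrt_mul hx.le]
  -- l, mb, nb
  have hl' : l = ps * px / (py * pz) := by
    rw [hl, hrA']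
    field_simp
    linear_combination (-2) * hps2
  have hm' : mb = px * pz / (ps * py) := by
    rw [hm, hrA']
    field_simp
    linear_combination (-2) * hpz2
  have hn' : nb = px * py / (ps * pz) := by
    rw [hn, hrA']
    field_simp
    linear_combination (-2) * hpy2
  -- the three square roots on the LHS
  have hsq1 : Real.sqrt (l ^ 2 + 1) = pb * pc / (py * pz) := by
    have h1 : l ^ 2 + 1
        = b * c / (((a + b + c) / 2 - b) * ((a + b + c) / 2 - c)) := by
      rw [hl', div_pow, mul_pow, mul_pow, hps2, hpx2, hpy2, hpz2,
        div_add' _ _ _ (mul_pos hy hz).ne', div_eq_div_iff (mul_pos hy hz).ne' (mul_pos hy hz).ne']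
      ring
    rw [h1, Real.sqrt_div (by positivity), Real.sqrt_mul hb.le, Real.sqrt_mul hy.le]
  have hsq2 : Real.sqrt (mb ^ 2 + 1) = pa * pc / (ps * py) := by
    have h1 : mb ^ 2 + 1
        = a * c / ((a + b + c) / 2 * ((a + b + c) / 2 - b)) := by
      rw [hm', div_pow, mul_pow, mul_pow, hps2, hpx2, hpy2, hpz2,
        div_add' _ _ _ (mul_pos hs0 hy).ne', div_eq_div_iff (mul_pos hs0 hy).ne' (mul_pos hs0 hy).ne']
      ring
    rw [h1, Real.sqrt_div (by positivity), Real.sqrt_mul ha.le, Real.sqrt_mul hs0.le]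
  have hsq3 : Real.sqrt (nb ^ 2 + 1) = pa * pb / (ps * pz) := by
    have h1 : nb ^ 2 + 1
        = a * b / ((a + b + c) / 2 * ((a + b + c) / 2 - c)) := by
      rw [hn', div_pow, mul_pow, mul_pow, hps2, hpx2, hpy2, hpz2,
        div_add' _ _ _ (mul_pos hs0 hz).ne', div_eq_div_iff (mul_pos hs0 hz).ne' (mul_pos hs0 hz).ne']
      ring
    rw [h1, Real.sqrt_div (by positivity), Real.sqrt_mul ha.le, Real.sqrt_mul hs0.le]
  -- cosh and sinh values
  have hcoshα : Real.cosh αA = ps / px := by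
    have h1 : Real.cosh αA ^ 2 = (a + b + c) / 2 / ((a + b + c) / 2 - a) := by
      rw [Real.cosh_sq, hsinhα, div_add' _ _ _ hx.ne', div_eq_div_iff hx.ne' hx.ne']
      ring
    calc Real.cosh αA = Real.sqrt (Real.cosh αA ^ 2) :=
          (Real.sqrt_sq (Real.cosh_pos αA).le).symm
      _ = ps / px := by rw [h1]; exact Real.sqrt_div hs0.le _
  have hcoshβ : Real.cosh βA = pb / px := by
    have h1 : Real.cosh βA ^ 2 = b / ((a + b + c) / 2 - a) := by
      rw [Real.cosh_sq, hsinhβ, div_add' _ _ _ hx.ne', div_eq_div_iff hx.ne' hx.ne']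
      ring
    calc Real.cosh βA = Real.sqrt (Real.cosh βA ^ 2) :=
          (Real.sqrt_sq (Real.cosh_pos βA).le).symm
      _ = pb / px := by rw [h1]; exact Real.sqrt_div hb.le _
  have hcoshγ : Real.cosh γA = pc / px := by
    have h1 : Real.cosh γA ^ 2 = c / ((a + b + c) / 2 - a) := by
      rw [Real.cosh_sq, hsinhγ, div_add' _ _ _ hx.ne', div_eq_div_iff hx.ne' hx.ne']
      ring
    calc Real.cosh γA = Real.sqrt (Real.cosh γA ^ 2) :=
          (Real.sqrt_sq (Real.cosh_pos γA).le).symm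
      _ = pc / px := by rw [h1]; exact Real.sqrt_div hc.le _
  have hsinhα' : Real.sinh αA = pa / px := by
    calc Real.sinh αA = Real.sqrt (Real.sinh αA ^ 2) :=
          (Real.sqrt_sq (Real.sinh_pos_iff.mpr hαA).le).symm
      _ = pa / px := by rw [hsinhα]; exact Real.sqrt_div ha.le _
  have hsinhβ' : Real.sinh βA = pz / px := by
    calc Real.sinh βA = Real.sqrt (Real.sinh βA ^ 2) :=
          (Real.sqrt_sq (Real.sinh_pos_iff.mpr hβA).le).symm
      _ = pz / px := by rw [hsinhβ]; exact Real.sqrt_div hz.le _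
  have hsinhγ' : Real.sinh γA = py / px := by
    calc Real.sinh γA = Real.sqrt (Real.sinh γA ^ 2) :=
          (Real.sqrt_sq (Real.sinh_pos_iff.mpr hγA).le).symm
      _ = py / px := by rw [hsinhγ]; exact Real.sqrt_div hy.le _
  -- sinh σA ^ 2 via cosh of the sum
  have hσ2 : Real.sinh σA ^ 2 = (Real.cosh (αA + βA + γA) - 1) / 2 := by
    have h2 : αA + βA + γA = 2 * σA := by rw [hσA]; ring
    rw [h2, Real.cosh_two_mul, Real.cosh_sq]
    ring
  have hrel : ps ^ 2 = px ^ 2 + py ^ 2 + pz ^ 2 := by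
    rw [hps2, hpx2, hpy2, hpz2]; ring
  rw [hσ2, Real.cosh_add, Real.cosh_add, Real.sinh_add, hcoshα, hcoshβ, hcoshγ,
    hsinhα', hsinhβ', hsinhγ', hsq1, hsq2, hsq3, hl', hm', hn', hrA', hr']
  linear_combination malfatti_key_id ps px py pz pa pb pc hps0 hpx0 hpy0 hpz0 hrel
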